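/- Let G be a 2-connected K_4-minor-free subcubic graph that contains the complete bipartite graph K_{2,3} in the following configuration: a longest cycle C of G and a path P edge-disjoint from C joining u, v ∈ V(C) with N(u) ∩ V(C) = N(v) ∩ V(C) = {u_1, u_2} (i.e., u and v have the same two neighbors on C). Then G is isomorphic to K_{2,3}. -/

import Mathlib

open SimpleGraph Matrix

theorem adjMatrix_isHermitian {V : Type} [Fintype V] [DecidableEq V]
    (G : SimpleGraph V) [DecidableRel G.Adj] : (G.adjMatrix ℝ).IsHermitian := by
  ext i j
  simp [Matrix.conjTranspose_apply, SimpleGraph.adj_comm]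

/-- Multiset of adjacency eigenvalues. -/
noncomputable def adjSpectrum {V : Type} [Fintype V] [DecidableEq V]
    (G : SimpleGraph V) [DecidableRel G.Adj] : Multiset ℝ :=
  Finset.univ.val.map (adjMatrix_isHermitian G).eigenvalues

/-- the i-th largest adjacency eigenvalue (1-indexed). -/
noncomputable def eigval {V : Type} [Fintype V] [DecidableEq V]
    (G : SimpleGraph V) [DecidableRel G.Adj] (i : ℕ) : ℝ :=
  ((adjSpectrum G).sort (· ≤ ·)).getD (Fintype.card V - i) 0

/-- `G` has a `K₄` minor: four nonempty, pairwise disjoint, connected branch sets,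
each pair joined by an edge of `G`. -/
def HasK4Minor {V : Type} (G : SimpleGraph V) : Prop :=
  ∃ B : Fin 4 → Set V,
    (∀ i, (B i).Nonempty) ∧
    (∀ i, (G.induce (B i)).Connected) ∧
    (Pairwise fun i j => Disjoint (B i) (B j)) ∧
    (∀ i j, i ≠ j → ∃ a ∈ B i, ∃ b ∈ B j, G.Adj a b)

namespace K23aux
open SimpleGraph Walk
variable {V : Type} {G : SimpleGraph V}

lemma cycle_from_path
    (hlen4 : ∀ (x : V) (D : G.Walk x x), D.IsCycle → D.length ≤ 4)
    {a c₁ c₂ c₃ z : V} (T : G.Walk z a) (hT : T.IsPath)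
    (h1 : G.Adj a c₁) (h2 : G.Adj c₁ c₂) (h3 : G.Adj c₂ c₃) (h4 : G.Adj c₃ z)
    (haz : a ≠ z) (hac2 : a ≠ c₂) (hac3 : a ≠ c₃) (hc13 : c₁ ≠ c₃)
    (hc1z : c₁ ≠ z) (hc2z : c₂ ≠ z)
    (k1 : c₁ ∉ T.support) (k2 : c₂ ∉ T.support) (k3 : c₃ ∉ T.support) : False := by
  have hp3 : (Walk.cons h4 T).IsPath := hT.cons k3
  have hp2 : (Walk.cons h3 (Walk.cons h4 T)).IsPath := by
    refine hp3.cons ?_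
    simp only [support_cons, List.mem_cons]
    push_neg
    exact ⟨h3.ne, k2⟩
  have hp1 : (Walk.cons h2 (Walk.cons h3 (Walk.cons h4 T))).IsPath := by
    refine hp2.cons ?_
    simp only [support_cons, List.mem_cons]
    push_neg
    exact ⟨h2.ne, hc13, k1⟩
  have na1 : a ≠ c₁ := h1.ne
  have hcyc : (Walk.cons h1 (Walk.cons h2 (Walk.cons h3 (Walk.cons h4 T)))).IsCycle := by
    rw [Walk.cons_isCycle_iff]
    refine ⟨hp1, ?_⟩
    simp only [Walk.edges_cons, List.mem_cons]
    push_neg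
    refine ⟨?_, ?_, ?_, ?_⟩
    · intro heq; have := Sym2.eq_iff.mp heq; tauto
    · intro heq; have := Sym2.eq_iff.mp heq; tauto
    · intro heq; have := Sym2.eq_iff.mp heq; tauto
    · intro he
      exact k1 (T.snd_mem_support_of_mem_edges he)
  have hle := hlen4 _ _ hcyc
  simp only [Walk.length_cons] at hle
  have : T.length = 0 := by omega
  exact haz (Walk.eq_of_length_eq_zero this).symm

lemma reach {S : Set V} :
    ∀ {x y : V} (R : G.Walk x y), x ∉ S → y ∈ S →
      ∃ p z, z ∈ S ∧ p ∉ S ∧ G.Adj p z ∧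
        ∃ W : G.Walk x p, (∀ s ∈ W.support, s ∉ S) ∧
          (∀ s ∈ W.support, s ∈ R.support) ∧ z ∈ R.support := by
  intro x y R
  induction R with
  | nil => intro hx hy; exact absurd hy hx
  | @cons x m y h R ih =>
    intro hx hy
    by_cases hm : m ∈ S
    · refine ⟨x, m, hm, hx, h, Walk.nil, ?_, ?_, ?_⟩
      · intro s hs; simp at hs; subst hs; exact hx
      · intro s hs; simp at hs; subst hs; simp
      · simp [R.start_mem_support]
    · obtain ⟨p, z, hz, hp, hadj, W, hW1, hW2, hz2⟩ := ih hm hy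
      refine ⟨p, z, hz, hp, hadj, Walk.cons h W, ?_, ?_, ?_⟩
      · intro s hs
        simp only [support_cons, List.mem_cons] at hs
        rcases hs with rfl | hs
        · exact hx
        · exact hW1 s hs
      · intro s hs
        simp only [support_cons, List.mem_cons] at hs ⊢
        rcases hs with rfl | hs
        · left; rfl
        · right; exact hW2 s hs
      · simp only [support_cons, List.mem_cons]; right; exact hz2

lemma path_loop_nil {x : V} {R : G.Walk x x} (h : R.IsPath) : R = Walk.nil :=
  congrArg Subtype.val (SimpleGraph.Path.loop_eq (⟨R, h⟩ : G.Path x x))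

lemma nil_of_isPath_eq {x y : V} (hxy : x = y) {R : G.Walk x y} (h : R.IsPath) :
    R.Nil := by
  subst hxy
  rw [Walk.nil_iff_eq_nil]
  exact path_loop_nil h

lemma length_one_structure {x y : V} {p : G.Walk x y} (h : p.length = 1) :
    p.support = [x, y] ∧ p.edges = [s(x, y)] := by
  cases p with
  | nil => simp at h
  | @cons _ m _ hadj q =>
    have hq0 : q.length = 0 := by simpa using h
    have hnil : q.Nil := Walk.nil_iff_length_eq.mpr hq0
    have hmy : m = y := hnil.eq
    have hsupp : q.support = [m] := Walk.nil_iff_support_eq.mp hnil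
    have hedge : q.edges = [] := List.length_eq_zero_iff.mp (by rw [Walk.length_edges]; exact hq0)
    subst hmy
    simp [hsupp, hedge]

lemma mem_support_closed {w x : V} {p : G.Walk w w} (hnp : ¬ p.Nil) :
    x ∈ p.support ↔ x ∈ p.support.tail := by
  obtain ⟨a, h, q, rfl⟩ := Walk.not_nil_iff.mp hnp
  simp only [Walk.support_cons, List.mem_cons, List.tail_cons]
  constructor
  · rintro (rfl | hx)
    · exact q.end_mem_support
    · exact hx
  · exact Or.inr

section DecEq
variable [DecidableEq V]

lemma cycle_struct_dir {u v u₁ u₂ : V} (huv : u ≠ v) (h12 : u₁ ≠ u₂)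
    (Q₂ : G.Walk u₁ u) (hpath : Q₂.IsPath) (hvQ : v ∈ Q₂.support)
    (hNu' : ∀ x, G.Adj u x → x ∈ Q₂.support → x = u₁ ∨ x = u₂)
    (hNv' : ∀ x, G.Adj v x → x ∈ Q₂.support → x = u₁ ∨ x = u₂)
    (hu1 : u ≠ u₁) (hu2 : u ≠ u₂) (hv1 : v ≠ u₁) (hv2 : v ≠ u₂) :
    Q₂.support = [u₁, v, u₂, u] ∧ Q₂.edges = [s(u₁,v), s(v,u₂), s(u₂,u)] := by
  have hspec : (Q₂.takeUntil v hvQ).append (Q₂.dropUntil v hvQ) = Q₂ := Q₂.take_spec hvQ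
  set A := Q₂.takeUntil v hvQ with hA
  set B := Q₂.dropUntil v hvQ with hB
  have hApath : A.IsPath := hpath.takeUntil hvQ
  have hBpath : B.IsPath := hpath.dropUntil hvQ
  have hnd : (A.support ++ B.support.tail).Nodup := by
    rw [← Walk.support_append, hspec]
    exact hpath.support_nodup
  have hdisj : List.Disjoint A.support B.support.tail := (List.nodup_append'.mp hnd).2.2
  have hsub : ∀ x, x ∈ A.support → x ∈ Q₂.support := fun x hx =>
    Q₂.support_takeUntil_subset hvQ hx
  have hsubB : ∀ x, x ∈ B.support → x ∈ Q₂.support := fun x hx =>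
    Q₂.support_dropUntil_subset hvQ hx
  -- analyze B : Walk v u
  obtain ⟨b, hb, B₂, hBeq⟩ := Walk.not_nil_iff.mp (Walk.not_nil_of_ne huv.symm (p := B))
  have hbtail : b ∈ B.support.tail := by rw [hBeq]; simp
  have hbQ : b ∈ Q₂.support := hsubB b (by rw [hBeq]; simp)
  have hb2 : b = u₂ := by
    rcases hNv' b hb hbQ with rfl | rfl
    · exact absurd hbtail (fun h => hdisj A.start_mem_support h)
    · rfl
  have hB₂path : B₂.IsPath := by
    rw [hBeq] at hBpath; exact ((Walk.cons_isPath_iff _ _).mp hBpath).1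
  have hB₂sub : ∀ x, x ∈ B₂.support → x ∈ B.support.tail := by
    intro x hx; rw [hBeq]; simpa using hx
  -- analyze end of B₂ : Walk b u via reverse
  have hub : u ≠ b := fun h => hu2 (h.trans hb2)
  obtain ⟨c, hc, R, hRe⟩ := Walk.not_nil_iff.mp (Walk.not_nil_of_ne hub (p := B₂.reverse))
  have hcB₂ : c ∈ B₂.support := by
    have : c ∈ B₂.reverse.support := by rw [hRe]; simp
    rwa [Walk.support_reverse, List.mem_reverse] at this
  have hcb : c = b := by
    rcases hNu' c hc (hsubB c (by rw [hBeq]; simp only [Walk.support_cons, List.mem_cons]; exact Or.inr hcB₂)) with rfl | h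
    · exact absurd (hB₂sub c hcB₂) (fun h => hdisj A.start_mem_support h)
    · exact h.trans hb2.symm
  have hRnil : R.Nil := by
    have hrev : B₂.reverse.IsPath := hB₂path.reverse
    rw [hRe] at hrev
    exact nil_of_isPath_eq hcb ((Walk.cons_isPath_iff _ _).mp hrev).1
  have hB₂len : B₂.length = 1 := by
    have : B₂.reverse.length = 1 := by
      rw [hRe, Walk.length_cons, Walk.nil_iff_length_eq.mp hRnil]
    simpa using this
  obtain ⟨hB₂supp, hB₂edges⟩ := length_one_structure hB₂len
  -- analyze A : Walk u₁ v via reverse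
  obtain ⟨d, hd, S, hSe⟩ := Walk.not_nil_iff.mp (Walk.not_nil_of_ne hv1 (p := A.reverse))
  have hdA : d ∈ A.support := by
    have : d ∈ A.reverse.support := by rw [hSe]; simp
    rwa [Walk.support_reverse, List.mem_reverse] at this
  have hd1 : d = u₁ := by
    rcases hNv' d hd (hsub d hdA) with rfl | rfl
    · rfl
    · exact absurd hdA (fun h => hdisj h (hb2 ▸ hbtail))
  have hSnil : S.Nil := by
    have hrev : A.reverse.IsPath := hApath.reverse
    rw [hSe] at hrev
    exact nil_of_isPath_eq hd1 ((Walk.cons_isPath_iff _ _).mp hrev).1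
  have hAlen : A.length = 1 := by
    have : A.reverse.length = 1 := by
      rw [hSe, Walk.length_cons, Walk.nil_iff_length_eq.mp hSnil]
    simpa using this
  obtain ⟨hAsupp, hAedges⟩ := length_one_structure hAlen
  constructor
  · rw [← hspec, Walk.support_append, hAsupp, hBeq]
    simp [hB₂supp, hb2]
  · rw [← hspec, Walk.edges_append, hAedges, hBeq]
    simp [hB₂edges, hb2]

lemma cycle_struct {w u v u₁ u₂ : V} {C : G.Walk w w} (hC : C.IsCycle)
    (hu : u ∈ C.support) (hv : v ∈ C.support) (huv : u ≠ v) (h12 : u₁ ≠ u₂)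
    (hNu : {x : V | G.Adj u x ∧ x ∈ C.support} = {u₁, u₂})
    (hNv : {x : V | G.Adj v x ∧ x ∈ C.support} = {u₁, u₂}) :
    C.length = 4 ∧
    (∀ x, x ∈ C.support ↔ (x = u ∨ x = v ∨ x = u₁ ∨ x = u₂)) ∧
    (∀ e, e ∈ C.edges ↔ (e = s(u,u₁) ∨ e = s(u,u₂) ∨ e = s(v,u₁) ∨ e = s(v,u₂))) := by
  have hNu' : ∀ x, (G.Adj u x ∧ x ∈ C.support) ↔ (x = u₁ ∨ x = u₂) := by
    intro x
    have := Set.ext_iff.mp hNu x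
    simpa using this
  have hNv' : ∀ x, (G.Adj v x ∧ x ∈ C.support) ↔ (x = u₁ ∨ x = u₂) := by
    intro x
    have := Set.ext_iff.mp hNv x
    simpa using this
  have hadj_uu₁ : G.Adj u u₁ := ((hNu' u₁).mpr (Or.inl rfl)).1
  have hadj_uu₂ : G.Adj u u₂ := ((hNu' u₂).mpr (Or.inr rfl)).1
  have hadj_vu₁ : G.Adj v u₁ := ((hNv' u₁).mpr (Or.inl rfl)).1
  have hadj_vu₂ : G.Adj v u₂ := ((hNv' u₂).mpr (Or.inr rfl)).1
  have hu1 : u ≠ u₁ := hadj_uu₁.ne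
  have hu2 : u ≠ u₂ := hadj_uu₂.ne
  have hv1 : v ≠ u₁ := hadj_vu₁.ne
  have hv2 : v ≠ u₂ := hadj_vu₂.ne
  set Q := C.rotate u hu with hQdef
  have hQc : Q.IsCycle := hC.rotate hu
  have hQC_supp : ∀ x, x ∈ Q.support ↔ x ∈ C.support := by
    intro x
    rw [mem_support_closed hQc.not_nil, mem_support_closed hC.not_nil,
      (C.support_rotate u hu).perm.mem_iff]
  have hQC_edges : ∀ e, e ∈ Q.edges ↔ e ∈ C.edges := fun e =>
    (C.rotate_edges u hu).perm.mem_iff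
  have hQC_len : Q.length = C.length := by
    rw [← Walk.length_edges, ← Walk.length_edges]
    exact (C.rotate_edges u hu).perm.length_eq
  obtain ⟨a, ha, Q₂, hQeq⟩ := Walk.not_nil_iff.mp hQc.not_nil
  rw [hQeq] at hQc
  obtain ⟨hQ₂path, hQ₂edge⟩ := (Walk.cons_isCycle_iff _ _).mp hQc
  have hQ₂sub : ∀ x, x ∈ Q₂.support → x ∈ C.support := by
    intro x hx
    rw [← hQC_supp, hQeq]
    simp only [Walk.support_cons, List.mem_cons]
    exact Or.inr hx
  have hvQ₂ : v ∈ Q₂.support := by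
    have : v ∈ Q.support := (hQC_supp v).mpr hv
    rw [hQeq] at this
    simp only [Walk.support_cons, List.mem_cons] at this
    exact this.resolve_left (Ne.symm huv)
  have hNu'' : ∀ x, G.Adj u x → x ∈ Q₂.support → x = u₁ ∨ x = u₂ := fun x hx hxs =>
    (hNu' x).mp ⟨hx, hQ₂sub x hxs⟩
  have hNv'' : ∀ x, G.Adj v x → x ∈ Q₂.support → x = u₁ ∨ x = u₂ := fun x hx hxs =>
    (hNv' x).mp ⟨hx, hQ₂sub x hxs⟩
  have haQ : a ∈ C.support := hQ₂sub a Q₂.start_mem_support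
  have hQlen : Q.length = 1 + Q₂.length := by rw [hQeq, Walk.length_cons]; omega
  rcases (hNu' a).mp ⟨ha, haQ⟩ with rfl | rfl
  · obtain ⟨hsupp, hedges⟩ := cycle_struct_dir huv h12 Q₂ hQ₂path hvQ₂ hNu'' hNv'' hu1 hu2 hv1 hv2
    have hlen : C.length = 4 := by
      rw [← hQC_len, hQlen]
      have : Q₂.support.length = Q₂.length + 1 := Walk.length_support _
      rw [hsupp] at this
      simp at this
      omega
    refine ⟨hlen, ?_, ?_⟩
    · intro x
      rw [← hQC_supp, hQeq]
      simp only [Walk.support_cons, List.mem_cons, hsupp]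
      constructor
      · rintro (rfl | rfl | rfl | rfl | rfl | h)
        · exact Or.inl rfl
        · exact Or.inr (Or.inr (Or.inl rfl))
        · exact Or.inr (Or.inl rfl)
        · exact Or.inr (Or.inr (Or.inr rfl))
        · exact Or.inl rfl
        · simp at h
      · rintro (rfl | rfl | rfl | rfl) <;> simp
    · intro e
      rw [← hQC_edges, hQeq]
      simp only [Walk.edges_cons, List.mem_cons, hedges]
      constructor
      · rintro (rfl | rfl | rfl | rfl | h)
        · exact Or.inl rfl
        · exact Or.inr (Or.inr (Or.inl (Sym2.eq_swap)))
        · exact Or.inr (Or.inr (Or.inr rfl))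
        · exact Or.inr (Or.inl (Sym2.eq_swap))
        · simp at h
      · rintro (rfl | rfl | rfl | rfl) <;> simp [Sym2.eq_swap]
  · obtain ⟨hsupp, hedges⟩ := cycle_struct_dir huv (Ne.symm h12) Q₂ hQ₂path hvQ₂
      (fun x hx hxs => (hNu'' x hx hxs).symm) (fun x hx hxs => (hNv'' x hx hxs).symm)
      hu2 hu1 hv2 hv1
    have hlen : C.length = 4 := by
      rw [← hQC_len, hQlen]
      have : Q₂.support.length = Q₂.length + 1 := Walk.length_support _
      rw [hsupp] at this
      simp at this
      omega
    refine ⟨hlen, ?_, ?_⟩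
    · intro x
      rw [← hQC_supp, hQeq]
      simp only [Walk.support_cons, List.mem_cons, hsupp]
      constructor
      · rintro (rfl | rfl | rfl | rfl | rfl | h)
        · exact Or.inl rfl
        · exact Or.inr (Or.inr (Or.inr rfl))
        · exact Or.inr (Or.inl rfl)
        · exact Or.inr (Or.inr (Or.inl rfl))
        · exact Or.inl rfl
        · simp at h
      · rintro (rfl | rfl | rfl | rfl) <;> simp
    · intro e
      rw [← hQC_edges, hQeq]
      simp only [Walk.edges_cons, List.mem_cons, hedges]
      constructor
      · rintro (rfl | rfl | rfl | rfl | h)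
        · exact Or.inr (Or.inl rfl)
        · exact Or.inr (Or.inr (Or.inr (Sym2.eq_swap)))
        · exact Or.inr (Or.inr (Or.inl rfl))
        · exact Or.inl (Sym2.eq_swap)
        · simp at h
      · rintro (rfl | rfl | rfl | rfl) <;> simp [Sym2.eq_swap]

end DecEq

lemma induce_singleton_connected (x : V) : (G.induce {x}).Connected := by
  rw [SimpleGraph.connected_iff]
  refine ⟨?_, ⟨⟨x, rfl⟩⟩⟩
  rintro ⟨a, ha⟩ ⟨b, hb⟩
  simp only [Set.mem_singleton_iff] at ha hb
  subst ha; subst hb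
  rfl

lemma induce_pair_connected {x y : V} (h : G.Adj x y) : (G.induce {x, y}).Connected := by
  rw [SimpleGraph.connected_iff]
  refine ⟨?_, ⟨⟨x, Or.inl rfl⟩⟩⟩
  have key : ∀ a : {z // z ∈ ({x, y} : Set V)}, (G.induce {x, y}).Reachable ⟨x, Or.inl rfl⟩ a := by
    rintro ⟨a, ha⟩
    rcases ha with rfl | ha
    · rfl
    · rcases ha with rfl
      exact SimpleGraph.Adj.reachable (by simp [SimpleGraph.comap_adj, h])
  intro a b
  exact (key a).symm.trans (key b)

lemma k4_minor {u v u₁ u₂ t : V}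
    (hu1 : u ≠ u₁) (hu2 : u ≠ u₂) (huv : u ≠ v) (hut : u ≠ t)
    (h12 : u₁ ≠ u₂) (hv1 : v ≠ u₁) (hv2 : v ≠ u₂) (ht1 : t ≠ u₁) (ht2 : t ≠ u₂)
    (htv : t ≠ v)
    (auu₁ : G.Adj u u₁) (auu₂ : G.Adj u u₂) (avu₁ : G.Adj v u₁) (avu₂ : G.Adj v u₂)
    (aut : G.Adj u t) (avt : G.Adj v t) (a12 : G.Adj u₁ u₂) :
    HasK4Minor G := by
  refine ⟨![{u}, {u₁}, {u₂}, {v, t}], ?_, ?_, ?_, ?_⟩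
  · intro i
    fin_cases i <;> simp [Set.insert_nonempty]
  · intro i
    fin_cases i
    · exact induce_singleton_connected u
    · exact induce_singleton_connected u₁
    · exact induce_singleton_connected u₂
    · exact induce_pair_connected avt
  · intro i j hij
    fin_cases i <;> fin_cases j <;>
      simp_all [Set.disjoint_singleton_left, Set.disjoint_singleton_right,
        Set.mem_insert_iff, Set.mem_singleton_iff, not_or] <;> tauto
  · intro i j hij
    fin_cases i <;> fin_cases j <;> simp_all <;>
      first
      | exact auu₁ | exact auu₂ | exact Or.inr aut
      | exact auu₁.symm | exact a12 | exact Or.inl avu₁.symm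
      | exact auu₂.symm | exact a12.symm | exact Or.inl avu₂.symm
      | exact Or.inr aut.symm | exact Or.inl avu₁ | exact Or.inl avu₂

section Fin
variable [Fintype V] [DecidableEq V]

lemma attach_aux
    (hlen4 : ∀ (x : V) (D : G.Walk x x), D.IsCycle → D.length ≤ 4)
    (h2conn : ∀ x : V, (G.induce (↑({x}ᶜ : Finset V) : Set V)).Connected)
    {a p₁ p₂ q₁ q₂ : V}
    (n1 : a ≠ p₁) (n2 : a ≠ p₂) (n3 : a ≠ q₁) (n4 : a ≠ q₂) (n5 : p₁ ≠ p₂)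
    (n6 : p₁ ≠ q₁) (n7 : p₁ ≠ q₂) (n8 : p₂ ≠ q₁) (n9 : p₂ ≠ q₂) (n10 : q₁ ≠ q₂)
    (hp₁a : G.Adj p₁ a) (hp₂a : G.Adj p₂ a)
    (e11 : G.Adj p₁ q₁) (e12 : G.Adj p₁ q₂) (e21 : G.Adj p₂ q₁) (e22 : G.Adj p₂ q₂)
    (hq1 : ¬ G.Adj a q₁) (hq2 : ¬ G.Adj a q₂)
    (hn1 : ∀ y, G.Adj p₁ y → y = a ∨ y = q₁ ∨ y = q₂)
    (hn2 : ∀ y, G.Adj p₂ y → y = a ∨ y = q₁ ∨ y = q₂) :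
    ∀ x, G.Adj a x → x = p₁ ∨ x = p₂ := by
  intro x hax
  by_contra hcon
  push_neg at hcon
  obtain ⟨hx1, hx2⟩ := hcon
  have hxa : x ≠ a := hax.ne'
  have hxq1 : x ≠ q₁ := fun h => hq1 (h ▸ hax)
  have hxq2 : x ≠ q₂ := fun h => hq2 (h ▸ hax)
  set s : Set V := (↑({a}ᶜ : Finset V) : Set V) with hs
  have hmem : ∀ y : V, y ∈ s ↔ y ≠ a := by
    intro y; simp [hs]
  obtain ⟨R₀⟩ := ((h2conn a).preconnected ⟨x, (hmem x).mpr hxa⟩ ⟨p₁, (hmem p₁).mpr n1.symm⟩)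
  let R : G.Walk x p₁ := R₀.map (SimpleGraph.Embedding.induce s).toHom
  have hRa : ∀ y ∈ R.support, y ≠ a := by
    intro y hy
    rw [show R.support = _ from Walk.support_map _ _, List.mem_map] at hy
    obtain ⟨⟨z, hz⟩, _, rfl⟩ := hy
    exact (hmem z).mp hz
  have hxS : x ∉ ({p₁, p₂, q₁, q₂} : Set V) := by
    simp [hx1, hx2, hxq1, hxq2]
  obtain ⟨p, z, hz, hp, hadj, W, hW1, hW2, hzR⟩ :=
    reach (S := {p₁, p₂, q₁, q₂}) R hxS (by simp)
  have hpa : p ≠ a := hRa p (hW2 p W.end_mem_support)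
  have hpS : p ∉ ({p₁, p₂, q₁, q₂} : Set V) := hp
  simp only [Set.mem_insert_iff, Set.mem_singleton_iff, not_or] at hpS
  obtain ⟨hpp1, hpp2, hpq1, hpq2⟩ := hpS
  have hzcases : z = q₁ ∨ z = q₂ := by
    simp only [Set.mem_insert_iff, Set.mem_singleton_iff] at hz
    rcases hz with rfl | rfl | rfl | rfl
    · exact absurd (hn1 p hadj.symm) (by simp [hpa, hpq1, hpq2])
    · exact absurd (hn2 p hadj.symm) (by simp [hpa, hpq1, hpq2])
    · exact Or.inl rfl
    · exact Or.inr rfl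
  have hTsub : (Walk.cons hax (W.concat hadj)).bypass.support ⊆
      a :: (W.support ++ [z]) := by
    intro y hy
    have := Walk.support_bypass_subset _ hy
    rwa [Walk.support_cons, Walk.support_concat] at this
  have hTpath : (Walk.cons hax (W.concat hadj)).bypass.IsPath := Walk.bypass_isPath _
  set T := (Walk.cons hax (W.concat hadj)).bypass with hT
  have hnotin : ∀ y, y ≠ a → y ≠ z → y ∈ ({p₁, p₂, q₁, q₂} : Set V) → y ∉ T.support := by
    intro y hya hyz hyS hyT
    have := hTsub hyT
    simp only [List.mem_cons, List.mem_append, List.not_mem_nil, or_false] at this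
    rcases this with rfl | h | rfl
    · exact hya rfl
    · exact hW1 y h hyS
    · exact hyz rfl
  rcases hzcases with rfl | rfl
  · exact cycle_from_path hlen4 T hTpath e21.symm e22 e12.symm hp₁a
      n3.symm n10 (Ne.symm n6) (Ne.symm n5) (Ne.symm n2) (Ne.symm n4)
      (hnotin p₂ n2.symm n8 (by simp))
      (hnotin q₂ n4.symm (Ne.symm n10) (by simp))
      (hnotin p₁ n1.symm n6 (by simp))
  · exact cycle_from_path hlen4 T hTpath e22.symm e21 e11.symm hp₁a
      n4.symm (Ne.symm n10) (Ne.symm n7) (Ne.symm n5) (Ne.symm n2) (Ne.symm n3)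
      (hnotin p₂ n2.symm n9 (by simp))
      (hnotin q₁ n3.symm n10 (by simp))
      (hnotin p₁ n1.symm n7 (by simp))

end Fin
end K23aux

theorem K23_configuration_forces_K23
    {V : Type} [Fintype V] [DecidableEq V]
    (G : SimpleGraph V) [DecidableRel G.Adj]
    (hcard : 3 ≤ Fintype.card V) (hconn : G.Connected)
    (h2conn : ∀ x : V, (G.induce (↑({x}ᶜ : Finset V) : Set V)).Connected)
    (hK4 : ¬ HasK4Minor G)
    (hdeg : ∀ v : V, G.degree v ≤ 3)
    (w : V) (C : G.Walk w w) (hC : C.IsCycle)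
    (hlong : ∀ (x : V) (C₂ : G.Walk x x), C₂.IsCycle → C₂.length ≤ C.length)
    (u v : V) (huv : u ≠ v) (hu : u ∈ C.support) (hv : v ∈ C.support)
    (P : G.Walk u v) (hP : P.IsPath)
    (hPC : ∀ e ∈ P.edges, e ∉ C.edges)
    (u₁ u₂ : V) (h12 : u₁ ≠ u₂)
    (hNu : {x : V | G.Adj u x ∧ x ∈ C.support} = {u₁, u₂})
    (hNv : {x : V | G.Adj v x ∧ x ∈ C.support} = {u₁, u₂}) :
    Nonempty (G ≃g completeBipartiteGraph (Fin 2) (Fin 3)) := by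
  classical
  obtain ⟨hlen, hsupp, hedge⟩ := K23aux.cycle_struct hC hu hv huv h12 hNu hNv
  have hlen4 : ∀ (x : V) (D : G.Walk x x), D.IsCycle → D.length ≤ 4 := fun x D hD =>
    hlen ▸ hlong x D hD
  have hNu' : ∀ x, (G.Adj u x ∧ x ∈ C.support) ↔ (x = u₁ ∨ x = u₂) := by
    intro x; have := Set.ext_iff.mp hNu x; simpa using this
  have hNv' : ∀ x, (G.Adj v x ∧ x ∈ C.support) ↔ (x = u₁ ∨ x = u₂) := by
    intro x; have := Set.ext_iff.mp hNv x; simpa using this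
  have auu₁ : G.Adj u u₁ := ((hNu' u₁).mpr (Or.inl rfl)).1
  have auu₂ : G.Adj u u₂ := ((hNu' u₂).mpr (Or.inr rfl)).1
  have avu₁ : G.Adj v u₁ := ((hNv' u₁).mpr (Or.inl rfl)).1
  have avu₂ : G.Adj v u₂ := ((hNv' u₂).mpr (Or.inr rfl)).1
  have hu1 : u ≠ u₁ := auu₁.ne
  have hu2 : u ≠ u₂ := auu₂.ne
  have hv1 : v ≠ u₁ := avu₁.ne
  have hv2 : v ≠ u₂ := avu₂.ne
  -- P analysis
  obtain ⟨t, hut, P₂, hPeq⟩ := Walk.not_nil_iff.mp (Walk.not_nil_of_ne huv (p := P))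
  have hfirstP : s(u, t) ∈ P.edges := by rw [hPeq]; simp
  have hcu1 : s(u,u₁) ∈ C.edges := (hedge _).mpr (Or.inl rfl)
  have hcu2 : s(u,u₂) ∈ C.edges := (hedge _).mpr (Or.inr (Or.inl rfl))
  have hcv1 : s(v,u₁) ∈ C.edges := (hedge _).mpr (Or.inr (Or.inr (Or.inl rfl)))
  have hcv2 : s(v,u₂) ∈ C.edges := (hedge _).mpr (Or.inr (Or.inr (Or.inr rfl)))
  have htC : t ∉ C.support := by
    intro htC
    rcases (hNu' t).mp ⟨hut, htC⟩ with rfl | rfl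
    · exact hPC _ hfirstP hcu1
    · exact hPC _ hfirstP hcu2
  have htu : t ≠ u := hut.ne'
  have htv : t ≠ v := fun h => htC (h ▸ hv)
  have ht1 : t ≠ u₁ := fun h => htC (by
    rw [h]; exact (hsupp u₁).mpr (Or.inr (Or.inr (Or.inl rfl))))
  have ht2 : t ≠ u₂ := fun h => htC (by
    rw [h]; exact (hsupp u₂).mpr (Or.inr (Or.inr (Or.inr rfl))))
  -- u₁ is not on P
  have hu₁P : u₁ ∉ P.support := by
    intro hmem
    obtain ⟨A', B', hsplit⟩ := Walk.mem_support_iff_exists_append.mp hmem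
    obtain ⟨x, hx, X, hXe⟩ :=
      Walk.not_nil_iff.mp (Walk.not_nil_of_ne (Ne.symm hu1) (p := A'.reverse))
    have hxA : s(u₁, x) ∈ A'.edges := by
      rw [← List.mem_reverse, ← Walk.edges_reverse, hXe]; simp
    obtain ⟨y, hy, Y, hYe⟩ :=
      Walk.not_nil_iff.mp (Walk.not_nil_of_ne (Ne.symm hv1) (p := B'))
    have hyB : s(u₁, y) ∈ B'.edges := by rw [hYe]; simp
    have hxP : s(u₁, x) ∈ P.edges := by
      rw [hsplit, Walk.edges_append]; exact List.mem_append_left _ hxA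
    have hyP : s(u₁, y) ∈ P.edges := by
      rw [hsplit, Walk.edges_append]; exact List.mem_append_right _ hyB
    have hxu : x ≠ u := by rintro rfl; exact hPC _ hxP (Sym2.eq_swap ▸ hcu1)
    have hxv : x ≠ v := by rintro rfl; exact hPC _ hxP (Sym2.eq_swap ▸ hcv1)
    have hyu : y ≠ u := by rintro rfl; exact hPC _ hyP (Sym2.eq_swap ▸ hcu1)
    have hyv : y ≠ v := by rintro rfl; exact hPC _ hyP (Sym2.eq_swap ▸ hcv1)
    have hxA' : x ∈ A'.support := by
      have : x ∈ A'.reverse.support := by rw [hXe]; simp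
      rwa [Walk.support_reverse, List.mem_reverse] at this
    have hyB' : y ∈ B'.support.tail := by rw [hYe]; simp
    have hnd : (A'.support ++ B'.support.tail).Nodup := by
      rw [← Walk.support_append, ← hsplit]; exact hP.support_nodup
    have hxy : x ≠ y := fun h => (List.nodup_append'.mp hnd).2.2 hxA' (h ▸ hyB')
    have hsubn : ({u, v, x, y} : Finset V) ⊆ G.neighborFinset u₁ := by
      intro z hz
      simp only [Finset.mem_insert, Finset.mem_singleton] at hz
      rcases hz with rfl | rfl | rfl | rfl
      · exact (SimpleGraph.mem_neighborFinset _ _ _).mpr auu₁.symm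
      · exact (SimpleGraph.mem_neighborFinset _ _ _).mpr avu₁.symm
      · exact (SimpleGraph.mem_neighborFinset _ _ _).mpr (P.adj_of_mem_edges hxP)
      · exact (SimpleGraph.mem_neighborFinset _ _ _).mpr (P.adj_of_mem_edges hyP)
    have h1' : x ∉ ({y} : Finset V) := by simp [hxy]
    have h2' : v ∉ ({x, y} : Finset V) := by simp [Ne.symm hxv, Ne.symm hyv]
    have h3' : u ∉ ({v, x, y} : Finset V) := by simp [huv, Ne.symm hxu, Ne.symm hyu]
    have hc4 : ({u, v, x, y} : Finset V).card = 4 := by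
      rw [Finset.card_insert_of_notMem h3', Finset.card_insert_of_notMem h2',
        Finset.card_insert_of_notMem h1', Finset.card_singleton]
    have hge : (4 : ℕ) ≤ G.degree u₁ := hc4 ▸ Finset.card_le_card hsubn
    have := hdeg u₁
    omega
  -- the cycle through P and u₁ bounds the length of P
  have au₁u : G.Adj u₁ u := auu₁.symm
  have au₁v : G.Adj u₁ v := avu₁.symm
  have hppath : ((Walk.cons au₁v P.reverse).reverse).IsPath := by
    apply Walk.IsPath.reverse
    apply hP.reverse.cons
    rwa [Walk.support_reverse, List.mem_reverse]
  have hEcyc : (Walk.cons au₁u (Walk.cons au₁v P.reverse).reverse).IsCycle := by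
    rw [Walk.cons_isCycle_iff]
    refine ⟨hppath, ?_⟩
    rw [Walk.edges_reverse, List.mem_reverse]
    simp only [Walk.edges_cons, List.mem_cons]
    push_neg
    constructor
    · intro heq
      have := Sym2.eq_iff.mp heq
      rcases this with ⟨-, h'⟩ | ⟨h', -⟩
      · exact huv h'
      · exact hv1 h'.symm
    · rw [Walk.edges_reverse, List.mem_reverse]
      intro hmem
      exact hPC _ hmem (Sym2.eq_swap ▸ hcu1)
  have hPlen : P.length ≤ 2 := by
    have := hlen4 _ _ hEcyc
    simp only [Walk.length_cons, Walk.length_reverse] at this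
    omega
  have hP₂len : P₂.length = 1 := by
    have hPl : P.length = P₂.length + 1 := by rw [hPeq, Walk.length_cons]
    have : P₂.length ≠ 0 := fun h => htv (Walk.eq_of_length_eq_zero h)
    omega
  obtain ⟨hP₂s, hP₂e⟩ := K23aux.length_one_structure hP₂len
  have atv : G.Adj t v := P₂.adj_of_mem_edges (by rw [hP₂e]; simp)
  -- full neighborhoods of u and v
  have hnfin : ∀ (z : V), G.Adj z u₁ → G.Adj z u₂ → G.Adj z t →
      G.neighborFinset z = {u₁, u₂, t} := by
    intro z a1 a2 a3
    apply (Finset.eq_of_subset_of_card_le ?_ ?_).symm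
    · intro y hy
      simp only [Finset.mem_insert, Finset.mem_singleton] at hy
      rcases hy with rfl | rfl | rfl
      · exact (SimpleGraph.mem_neighborFinset _ _ _).mpr a1
      · exact (SimpleGraph.mem_neighborFinset _ _ _).mpr a2
      · exact (SimpleGraph.mem_neighborFinset _ _ _).mpr a3
    · have h1' : u₂ ∉ ({t} : Finset V) := by simp [Ne.symm ht2]
      have h2' : u₁ ∉ ({u₂, t} : Finset V) := by simp [h12, Ne.symm ht1]
      have : ({u₁, u₂, t} : Finset V).card = 3 := by
        rw [Finset.card_insert_of_notMem h2', Finset.card_insert_of_notMem h1',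
          Finset.card_singleton]
      rw [this]
      exact hdeg z
  have hnbru : ∀ y, G.Adj u y ↔ (y = u₁ ∨ y = u₂ ∨ y = t) := by
    intro y
    rw [← SimpleGraph.mem_neighborFinset, hnfin u auu₁ auu₂ hut]
    simp
  have hnbrv : ∀ y, G.Adj v y ↔ (y = u₁ ∨ y = u₂ ∨ y = t) := by
    intro y
    rw [← SimpleGraph.mem_neighborFinset, hnfin v avu₁ avu₂ atv.symm]
    simp
  -- non-edges
  have nuv : ¬ G.Adj u v := fun h => by
    rcases (hnbru v).mp h with h' | h' | h'
    exacts [hv1 h', hv2 h', htv h'.symm]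
  have n12 : ¬ G.Adj u₁ u₂ := fun h => hK4
    (K23aux.k4_minor hu1 hu2 huv htu.symm h12 hv1 hv2 ht1 ht2 htv
      auu₁ auu₂ avu₁ avu₂ hut atv.symm h)
  have hT1path : (Walk.cons au₁u Walk.nil).IsPath := by
    rw [Walk.cons_isPath_iff]
    exact ⟨Walk.IsPath.nil, by simp [Ne.symm hu1]⟩
  have hT2path : (Walk.cons auu₂.symm Walk.nil).IsPath := by
    rw [Walk.cons_isPath_iff]
    exact ⟨Walk.IsPath.nil, by simp [Ne.symm hu2]⟩
  have n1t : ¬ G.Adj u₁ t := fun h =>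
    K23aux.cycle_from_path hlen4 (Walk.cons au₁u Walk.nil) hT1path
      auu₂ avu₂.symm atv.symm h.symm
      hu1 huv htu.symm (Ne.symm ht2) (Ne.symm h12) hv1
      (by simp [Ne.symm h12, Ne.symm hu2])
      (by simp [hv1, Ne.symm huv])
      (by simp [ht1, htu])
  have n2t : ¬ G.Adj u₂ t := fun h =>
    K23aux.cycle_from_path hlen4 (Walk.cons auu₂.symm Walk.nil) hT2path
      auu₁ avu₁.symm atv.symm h.symm
      hu2 huv htu.symm (Ne.symm ht1) h12 hv2
      (by simp [h12, Ne.symm hu1])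
      (by simp [hv2, Ne.symm huv])
      (by simp [ht2, htu])
  -- neighborhoods of u₁, u₂, t
  have hnb1 : ∀ x, G.Adj u₁ x → x = u ∨ x = v :=
    K23aux.attach_aux hlen4 h2conn (Ne.symm hu1) (Ne.symm hv1) h12 (Ne.symm ht1)
      huv hu2 htu.symm hv2 htv.symm (Ne.symm ht2)
      auu₁ avu₁ auu₂ hut avu₂ atv.symm n12 n1t
      (fun y hy => (hnbru y).mp hy |>.imp_left id |> fun h => by tauto)
      (fun y hy => by have := (hnbrv y).mp hy; tauto)
  have hnb2 : ∀ x, G.Adj u₂ x → x = u ∨ x = v :=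
    K23aux.attach_aux hlen4 h2conn (Ne.symm hu2) (Ne.symm hv2) (Ne.symm h12) (Ne.symm ht2)
      huv hu1 htu.symm hv1 htv.symm (Ne.symm ht1)
      auu₂ avu₂ auu₁ hut avu₁ atv.symm (fun h => n12 h.symm) n2t
      (fun y hy => by have := (hnbru y).mp hy; tauto)
      (fun y hy => by have := (hnbrv y).mp hy; tauto)
  have hnbt : ∀ x, G.Adj t x → x = u ∨ x = v :=
    K23aux.attach_aux hlen4 h2conn htu htv ht1 ht2
      huv hu1 hu2 hv1 hv2 h12
      hut atv.symm auu₁ auu₂ avu₁ avu₂ (fun h => n1t h.symm) (fun h => n2t h.symm)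
      (fun y hy => by have := (hnbru y).mp hy; tauto)
      (fun y hy => by have := (hnbrv y).mp hy; tauto)
  -- every vertex is among the five
  have hall : ∀ y : V, y = u ∨ y = v ∨ y = u₁ ∨ y = u₂ ∨ y = t := by
    intro y
    by_contra hy
    push_neg at hy
    obtain ⟨hyu, hyv, hy1, hy2, hyt⟩ := hy
    obtain ⟨R⟩ := hconn.preconnected y u
    obtain ⟨p, z, hz, hp, hadj, W, hW1, hW2, hzR⟩ :=
      K23aux.reach (S := {u, v, u₁, u₂, t}) R (by simp [hyu, hyv, hy1, hy2, hyt]) (by simp)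
    simp only [Set.mem_insert_iff, Set.mem_singleton_iff, not_or] at hp
    obtain ⟨hpu, hpv, hp1, hp2, hpt⟩ := hp
    simp only [Set.mem_insert_iff, Set.mem_singleton_iff] at hz
    rcases hz with rfl | rfl | rfl | rfl | rfl
    · exact absurd ((hnbru p).mp hadj.symm) (by simp [hp1, hp2, hpt])
    · exact absurd ((hnbrv p).mp hadj.symm) (by simp [hp1, hp2, hpt])
    · exact absurd (hnb1 p hadj.symm) (by simp [hpu, hpv])
    · exact absurd (hnb2 p hadj.symm) (by simp [hpu, hpv])
    · exact absurd (hnbt p hadj.symm) (by simp [hpu, hpv])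
  -- adjacency facts in both directions
  have a_u1u : G.Adj u₁ u := auu₁.symm
  have a_u1v : G.Adj u₁ v := avu₁.symm
  have a_u2u : G.Adj u₂ u := auu₂.symm
  have a_u2v : G.Adj u₂ v := avu₂.symm
  have a_tu : G.Adj t u := hut.symm
  have a_tv : G.Adj t v := atv
  have a_ut : G.Adj u t := hut
  have a_vt : G.Adj v t := atv.symm
  have nvu : ¬ G.Adj v u := fun h => nuv h.symm
  have nt1 : ¬ G.Adj t u₁ := fun h => n1t h.symm
  have nt2 : ¬ G.Adj t u₂ := fun h => n2t h.symm
  have n21 : ¬ G.Adj u₂ u₁ := fun h => n12 h.symm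
  -- construct the isomorphism
  refine ⟨⟨⟨fun a => if a = u then Sum.inl 0 else if a = v then Sum.inl 1
      else if a = u₁ then Sum.inr 0 else if a = u₂ then Sum.inr 1 else Sum.inr 2,
      Sum.elim (![u, v]) (![u₁, u₂, t]), ?_, ?_⟩, ?_⟩⟩
  · intro a
    rcases hall a with rfl | rfl | rfl | rfl | rfl <;>
      simp [Ne.symm huv, Ne.symm hu1, Ne.symm hu2, Ne.symm h12, htu, htv, ht1, ht2,
        hu1, hu2, hv1, hv2, h12, huv, Ne.symm hv1, Ne.symm hv2, Ne.symm htu, Ne.symm htv,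
        Ne.symm ht1, Ne.symm ht2]
  · intro s
    rcases s with a | a <;> fin_cases a <;>
      simp [Ne.symm huv, Ne.symm hu1, Ne.symm hu2, Ne.symm h12, htu, htv, ht1, ht2,
        hu1, hu2, hv1, hv2, h12, huv, Ne.symm hv1, Ne.symm hv2, Ne.symm htu, Ne.symm htv,
        Ne.symm ht1, Ne.symm ht2]
  · intro a b
    rcases hall a with rfl | rfl | rfl | rfl | rfl <;>
      rcases hall b with rfl | rfl | rfl | rfl | rfl <;>
      simp [Ne.symm huv, Ne.symm hu1, Ne.symm hu2, Ne.symm h12, htu, htv, ht1, ht2,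
        hu1, hu2, hv1, hv2, h12, huv, Ne.symm hv1, Ne.symm hv2,
        auu₁, auu₂, avu₁, avu₂, a_u1u, a_u1v, a_u2u, a_u2v, a_tu, a_tv, a_ut, a_vt,
        nuv, nvu, n12, n21, n1t, n2t, nt1, nt2]
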